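/- Let (M, d) be a metric space, Y a type, S' a finite set of labeled points in M × Y, x_test ∈ M, y ∈ Y, and b ∈ ℕ. Suppose S' contains at least b+1 points with label different from y, and let r be the (b+1)-st smallest value in the multiset {d(x_test, x_i) : (x_i, y_i) ∈ S', y_i ≠ y}. Then every classifier h : M → Y with h(x_test) = y that makes at most b mistakes on S' satisfies inf{d(x_test, x') : x' ∈ M, h(x') ≠ y} ≤ r. -/

import Mathlib

open Classical in
/-- Number of mistakes of classifier `h` on dataset `S`. -/
noncomputable def mistakes {X Y : Type*} (h : X → Y) (S : Finset (X × Y)) : ℕ :=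
  (S.filter fun p => h p.1 ≠ p.2).card

open Classical in
theorem stmt12 {M Y : Type*} [MetricSpace M]
    (S' : Finset (M × Y)) (xtest : M) (y : Y) (b : ℕ)
    (hcard : b + 1 ≤ (S'.filter fun p => p.2 ≠ y).card)
    (r : ℝ)
    (hr : r = (Multiset.sort
        (((S'.filter fun p => p.2 ≠ y).val).map fun p => dist xtest p.1) (· ≤ ·)).getD b 0)
    (h : M → Y) (hxtest : h xtest = y) (hmist : mistakes h S' ≤ b) :
    Metric.infDist xtest {x' | h x' ≠ y} ≤ r := by
  classical
  set T := S'.filter fun p => p.2 ≠ y with hT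
  set D : Multiset ℝ := T.val.map fun p => dist xtest p.1 with hD
  set L := Multiset.sort D (· ≤ ·) with hL
  have hlen : L.length = T.card := by
    rw [hL, Multiset.length_sort, hD, Multiset.card_map]; rfl
  have hb : b < L.length := by rw [hlen]; omega
  have hsorted : L.Pairwise (· ≤ ·) := Multiset.pairwise_sort _ _
  have hrr : r = L.get ⟨b, hb⟩ := by
    rw [hr, List.getD_eq_getElem?_getD, List.getElem?_eq_getElem hb]; rfl
  have htake : ∀ x ∈ L.take (b+1), x ≤ r := by
    intro x hx
    rw [List.mem_take_iff_getElem] at hx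
    obtain ⟨i, hi, hix⟩ := hx
    have hib : i ≤ b := by omega
    have hiL : i < L.length := lt_of_lt_of_le hi (min_le_right _ _)
    have := List.Pairwise.rel_get_of_le hsorted (show (⟨i, hiL⟩ : Fin L.length) ≤ ⟨b, hb⟩ from hib)
    rw [hrr]
    simpa [hix] using this
  have hcountL : b + 1 ≤ L.countP (fun t => decide (t ≤ r)) := by
    have hsplit : L.countP (fun t => decide (t ≤ r)) =
        (L.take (b+1)).countP (fun t => decide (t ≤ r)) +
        (L.drop (b+1)).countP (fun t => decide (t ≤ r)) := by
      rw [← List.countP_append, List.take_append_drop]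
    have htakeall : (L.take (b+1)).countP (fun t => decide (t ≤ r)) = (L.take (b+1)).length := by
      rw [List.countP_eq_length]
      intro a ha
      simpa using htake a ha
    have hlentake : (L.take (b+1)).length = b + 1 := by
      rw [List.length_take]; omega
    omega
  have hcountD : b + 1 ≤ Multiset.countP (fun t => t ≤ r) D := by
    have : D = (L : Multiset ℝ) := (Multiset.sort_eq _ _).symm
    rw [this, Multiset.coe_countP]
    exact hcountL
  set U := T.filter fun p => dist xtest p.1 ≤ r with hU
  have hUcard : b + 1 ≤ U.card := by
    have : U.card = Multiset.countP (fun t => t ≤ r) D := by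
      rw [hU, Finset.card_filter, hD, Multiset.countP_map]
      simp [Finset.sum_boole, Multiset.countP_eq_card_filter]
      rfl
    omega
  have hex : ∃ p ∈ U, h p.1 = p.2 := by
    by_contra hcon
    push_neg at hcon
    have hsub : U ⊆ S'.filter fun p => h p.1 ≠ p.2 := by
      intro p hp
      have hpS : p ∈ S' := Finset.mem_of_mem_filter p (Finset.mem_of_mem_filter p hp)
      exact Finset.mem_filter.2 ⟨hpS, hcon p hp⟩
    have := Finset.card_le_card hsub
    unfold mistakes at hmist
    omega
  obtain ⟨p, hpU, hpc⟩ := hex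
  have hpT : p ∈ T := Finset.mem_of_mem_filter p hpU
  have hpy : p.2 ≠ y := (Finset.mem_filter.1 hpT).2
  have hpd : dist xtest p.1 ≤ r := (Finset.mem_filter.1 hpU).2
  have hmem : p.1 ∈ {x' | h x' ≠ y} := by
    simp only [Set.mem_setOf_eq, hpc]; exact hpy
  exact le_trans (Metric.infDist_le_dist_of_mem hmem) hpd
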